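/- Every primitive positive definite binary quadratic form aX² + bXY + cY² over ℤ is properly equivalent to a unique reduced form, where [a,b,c] is reduced if |b| ≤ a ≤ c, and b ≥ 0 whenever |b| = a or a = c. -/

import Mathlib

/-- The binary quadratic form `[a,b,c] = aX² + bXY + cY²` evaluated at `(x,y)`. -/
def evalQF (f : ℤ × ℤ × ℤ) (x y : ℤ) : ℤ :=
  f.1 * x ^ 2 + f.2.1 * x * y + f.2.2 * y ^ 2

/-- The discriminant `b² - 4ac` of the form `[a,b,c]`. -/
def discQF (f : ℤ × ℤ × ℤ) : ℤ := f.2.1 ^ 2 - 4 * f.1 * f.2.2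

/-- `[a,b,c]` is primitive if `gcd(a,b,c) = 1`. -/
def IsPrimitiveQF (f : ℤ × ℤ × ℤ) : Prop := Int.gcd (Int.gcd f.1 f.2.1) f.2.2 = 1

/-- `[a,b,c]` is positive definite if `a > 0` and `b² - 4ac < 0`. -/
def IsPosDefQF (f : ℤ × ℤ × ℤ) : Prop := 0 < f.1 ∧ discQF f < 0

/-- `[a,b,c]` is reduced if `|b| ≤ a ≤ c`, and `b ≥ 0` whenever `|b| = a` or `a = c`. -/
def IsReducedQF (f : ℤ × ℤ × ℤ) : Prop :=
  |f.2.1| ≤ f.1 ∧ f.1 ≤ f.2.2 ∧ ((|f.2.1| = f.1 ∨ f.1 = f.2.2) → 0 ≤ f.2.1)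

/-- `f` and `g` are properly equivalent if `g` is obtained from `f` by an `SL₂(ℤ)`
change of variables. -/
def ProperEquivQF (f g : ℤ × ℤ × ℤ) : Prop :=
  ∃ α β γ δ : ℤ, α * δ - β * γ = 1 ∧
    ∀ x y : ℤ, evalQF g x y = evalQF f (α * x + β * y) (γ * x + δ * y)

namespace QFAux

lemma equiv_trans {f g h : ℤ × ℤ × ℤ} (h1 : ProperEquivQF f g) (h2 : ProperEquivQF g h) :
    ProperEquivQF f h := by
  obtain ⟨α, β, γ, δ, hd, he⟩ := h1
  obtain ⟨α', β', γ', δ', hd', he'⟩ := h2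
  refine ⟨α * α' + β * γ', α * β' + β * δ', γ * α' + δ * γ', γ * β' + δ * δ', ?_, fun x y => ?_⟩
  · linear_combination (α' * δ' - β' * γ') * hd + hd'
  · rw [he', he]; ring_nf

lemma equiv_symm {f g : ℤ × ℤ × ℤ} (h1 : ProperEquivQF f g) : ProperEquivQF g f := by
  obtain ⟨α, β, γ, δ, hd, he⟩ := h1
  refine ⟨δ, -β, -γ, α, by linarith [hd], fun x y => ?_⟩
  rw [he]
  have e1 : α * (δ * x + -β * y) + β * (-γ * x + α * y) = x := by linear_combination x * hd
  have e2 : γ * (δ * x + -β * y) + δ * (-γ * x + α * y) = y := by linear_combination y * hd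
  rw [e1, e2]

lemma equiv_T (a b c n : ℤ) :
    ProperEquivQF (a, b, c) (a, b + 2 * a * n, c + b * n + a * n ^ 2) :=
  ⟨1, n, 0, 1, by ring, fun x y => by simp [evalQF]; ring⟩

lemma equiv_S (a b c : ℤ) : ProperEquivQF (a, b, c) (c, -b, a) :=
  ⟨0, -1, 1, 0, by ring, fun x y => by simp [evalQF]; ring⟩

lemma one_le_sq {x : ℤ} (hx : x ≠ 0) : 1 ≤ x ^ 2 := by
  have h := Int.one_le_abs hx
  nlinarith [sq_abs x, abs_nonneg x]

lemma eval_pos {f : ℤ × ℤ × ℤ} (hf : IsPosDefQF f) (x y : ℤ) (hxy : ¬(x = 0 ∧ y = 0)) :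
    0 < evalQF f x y := by
  obtain ⟨a, b, c⟩ := f
  obtain ⟨ha, hd⟩ := hf
  simp [IsPosDefQF, discQF] at ha hd ⊢
  simp only [evalQF]
  rcases eq_or_ne y 0 with hy | hy
  · subst hy
    have hx : x ≠ 0 := by tauto
    have : 1 ≤ x ^ 2 := one_le_sq hx
    nlinarith
  · have hy2 : 1 ≤ y ^ 2 := one_le_sq hy
    nlinarith [sq_nonneg (2 * a * x + b * y)]

lemma min_val {a b c : ℤ} (ha : 0 < a) (hb : |b| ≤ a) (hc : a ≤ c) (x y : ℤ)
    (hxy : ¬(x = 0 ∧ y = 0)) : a ≤ a * x ^ 2 + b * x * y + c * y ^ 2 := by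
  obtain ⟨hb1, hb2⟩ := abs_le.mp hb
  rcases eq_or_ne x 0 with hx | hx
  · subst hx
    have hy : y ≠ 0 := by tauto
    have : 1 ≤ y ^ 2 := one_le_sq hy
    nlinarith
  rcases eq_or_ne y 0 with hy | hy
  · subst hy
    have : 1 ≤ x ^ 2 := one_le_sq hx
    nlinarith
  · have h1 : 1 ≤ x ^ 2 := one_le_sq hx
    have h2 : 1 ≤ y ^ 2 := one_le_sq hy
    nlinarith [sq_nonneg (x + y), sq_nonneg (x - y), sq_nonneg (x*y - 1), sq_nonneg (x*y + 1)]

lemma min_val' {a b c : ℤ} (ha : 0 < a) (hb : |b| ≤ a) (hc : a ≤ c) (x y : ℤ)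
    (hx : x ≠ 0) (hy : y ≠ 0) : a + c - |b| ≤ a * x ^ 2 + b * x * y + c * y ^ 2 := by
  obtain ⟨hb1, hb2⟩ := abs_le.mp hb
  have h1 : 1 ≤ x ^ 2 := one_le_sq hx
  have h2 : 1 ≤ y ^ 2 := one_le_sq hy
  rcases abs_cases b with ⟨hB, _⟩ | ⟨hB, _⟩ <;> rw [hB] <;>
    nlinarith [sq_nonneg (x + y), sq_nonneg (x - y), sq_nonneg (x*y - 1), sq_nonneg (x*y + 1),
      mul_pos ha (lt_of_lt_of_le ha hc)]

lemma posdef_equiv {f g : ℤ × ℤ × ℤ} (h : ProperEquivQF f g) (hf : IsPosDefQF f) :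
    IsPosDefQF g := by
  obtain ⟨α, β, γ, δ, hdet, he⟩ := h
  constructor
  · have h10 := he 1 0
    have hg1 : evalQF g 1 0 = g.1 := by simp [evalQF]
    rw [hg1] at h10
    rw [h10]
    refine eval_pos hf _ _ ?_
    rintro ⟨h1, h2⟩
    simp at h1 h2
    rw [h1, h2] at hdet
    simp at hdet
  · obtain ⟨a, b, c⟩ := f; obtain ⟨a', b', c'⟩ := g
    have h10 := he 1 0; have h01 := he 0 1; have h11 := he 1 1
    simp only [evalQF] at h10 h01 h11
    have e1 : a' = a * α ^ 2 + b * α * γ + c * γ ^ 2 := by linear_combination h10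
    have e2 : c' = a * β ^ 2 + b * β * δ + c * δ ^ 2 := by linear_combination h01
    have e3 : b' = 2 * a * α * β + b * (α * δ + β * γ) + 2 * c * γ * δ := by
      linear_combination h11 - h10 - h01
    have hd := hf.2
    simp only [discQF] at hd ⊢
    have key : b' ^ 2 - 4 * a' * c' = b ^ 2 - 4 * a * c := by
      rw [e1, e2, e3]
      linear_combination (b ^ 2 - 4 * a * c) * (α * δ - β * γ + 1) * hdet
    linarith

lemma exists_reduced_aux : ∀ n : ℕ, ∀ f : ℤ × ℤ × ℤ, f.1.toNat ≤ n → 0 < f.1 → discQF f < 0 →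
    ∃ g, IsReducedQF g ∧ ProperEquivQF f g := by
  intro n
  induction n with
  | zero => intro f h1 h2 _; omega
  | succ n ih =>
    rintro ⟨a, b, c⟩ hn ha hd
    simp only [discQF] at hd
    simp only at ha hn ⊢
    set q : ℤ := (b + a) / (2 * a) with hq
    have h2a : (0:ℤ) < 2 * a := by linarith
    set b1 : ℤ := b + 2 * a * (-q) with hb1
    have hbmod : b1 = (b + a) % (2 * a) - a := by
      rw [hb1, hq, Int.emod_def]; ring
    have hb1lb : -a ≤ b1 := by
      have := Int.emod_nonneg (b + a) (by linarith : (2*a) ≠ 0)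
      omega
    have hb1ub : b1 < a := by
      have := Int.emod_lt_of_pos (b + a) h2a
      omega
    set c1 : ℤ := c + b * (-q) + a * (-q) ^ 2 with hc1
    have hT := equiv_T a b c (-q)
    have hd1 : b1 ^ 2 - 4 * a * c1 < 0 := by
      rw [hb1, hc1]; nlinarith
    have hc1pos : 0 < c1 := by nlinarith [sq_nonneg b1]
    rcases lt_or_ge c1 a with hlt | hge
    · have hS := equiv_S a b1 c1
      have hrec := ih (c1, -b1, a) (by simp; omega) (by simpa) (by simp [discQF]; nlinarith)
      obtain ⟨g, hg, he⟩ := hrec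
      exact ⟨g, hg, equiv_trans (equiv_trans hT hS) he⟩
    · have hA : |a| = a := abs_of_pos ha
      rcases eq_or_lt_of_le hb1lb with hbeq | hbgt
      · have hT2 := equiv_T a b1 c1 1
        have heq : (a, b1 + 2*a*1, c1 + b1*1 + a*1^2) = (a, a, c1 + b1 + a) := by
          rw [← hbeq]; ring_nf
        rw [heq] at hT2
        refine ⟨(a, a, c1 + b1 + a), ⟨?_, ?_, fun _ => ?_⟩, equiv_trans hT hT2⟩ <;> simp <;> omega
      · rcases le_or_gt 0 b1 with hbnn | hbneg
        · have hB : |b1| = b1 := abs_of_nonneg hbnn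
          refine ⟨(a, b1, c1), ⟨?_, ?_, fun _ => hbnn⟩, hT⟩ <;> simp <;> omega
        · have hB : |b1| = -b1 := abs_of_neg hbneg
          rcases eq_or_lt_of_le hge with haeqc | haltc
          · have hS := equiv_S a b1 c1
            refine ⟨(c1, -b1, a), ⟨?_, ?_, fun _ => ?_⟩, equiv_trans hT hS⟩ <;> simp <;> omega
          · refine ⟨(a, b1, c1), ⟨?_, ?_, ?_⟩, hT⟩
            · simp; omega
            · simpa
            · intro hcase; exfalso; rcases hcase with h | h <;> simp at h <;> omega

lemma exists_reduced (f : ℤ × ℤ × ℤ) (hpos : IsPosDefQF f) :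
    ∃ g, IsReducedQF g ∧ ProperEquivQF f g :=
  exists_reduced_aux f.1.toNat f le_rfl hpos.1 hpos.2

lemma first_le {g g' : ℤ × ℤ × ℤ} (hg : IsReducedQF g) (ha : 0 < g.1)
    (h : ProperEquivQF g g') : g.1 ≤ g'.1 := by
  obtain ⟨a, b, c⟩ := g; obtain ⟨a', b', c'⟩ := g'
  obtain ⟨hb, hc, _⟩ := hg
  obtain ⟨α, β, γ, δ, hdet, he⟩ := h
  simp only at *
  have h1 := he 1 0
  simp only [evalQF] at h1
  have e1 : a' = a * α ^ 2 + b * α * γ + c * γ ^ 2 := by linear_combination h1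
  have hne : ¬(α = 0 ∧ γ = 0) := by rintro ⟨rfl, rfl⟩; simp at hdet
  have := min_val ha hb hc α γ hne
  linarith

lemma caseC {a b' c' α β γ δ : ℤ} (ha : 0 < a) (hdet : α * δ - β * γ = 1)
    (hα : α ≠ 0) (hγ : γ ≠ 0) (hbl' : -a ≤ b') (hbu' : b' ≤ a) (hbd2' : a = c' → 0 ≤ b')
    (e1 : a = a * α ^ 2 + a * α * γ + a * γ ^ 2)
    (e2 : c' = a * β ^ 2 + a * β * δ + a * δ ^ 2)
    (e3 : b' = 2 * a * α * β + a * (α * δ + β * γ) + 2 * a * γ * δ) :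
    a = b' ∧ a = c' := by
  have hsum : a * (α ^ 2 + α * γ + γ ^ 2 - 1) = 0 := by linear_combination -e1
  have hsum1 : α ^ 2 + α * γ + γ ^ 2 = 1 := by
    rcases mul_eq_zero.mp hsum with h0 | h0
    · omega
    · linarith
  have k1 := one_le_sq hα
  have k2 := one_le_sq hγ
  have k3 : (α + γ) ^ 2 + α ^ 2 + γ ^ 2 = 2 := by linear_combination 2 * hsum1
  have k4 : (α + γ) ^ 2 = 0 := by nlinarith [sq_nonneg (α + γ)]
  have k5 : γ = -α := by nlinarith [sq_nonneg (α + γ)]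
  subst k5
  have hα2 : α ^ 2 = 1 := by linarith
  have hαcases : (α - 1) * (α + 1) = 0 := by linear_combination hα2
  rcases mul_eq_zero.mp hαcases with h0 | h0
  · -- α = 1, γ = -1
    have hα1 : α = 1 := by omega
    subst hα1
    have hδ : δ = 1 - β := by linear_combination hdet
    subst hδ
    have l1 : b' = a * (2 * β - 1) := by linear_combination e3
    have lr1 : 0 ≤ β := by nlinarith
    have lr2 : β ≤ 1 := by nlinarith
    have hβ : β = 0 ∨ β = 1 := by omega
    rcases hβ with rfl | rfl
    · exfalso
      have l2 : c' = a := by linear_combination e2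
      have l3 : b' = -a := by linear_combination l1
      have := hbd2' (by omega)
      omega
    · have l2 : c' = a := by linear_combination e2
      have l3 : b' = a := by linear_combination l1
      exact ⟨l3.symm, l2.symm⟩
  · -- α = -1, γ = 1
    have hα1 : α = -1 := by omega
    subst hα1
    have hδ : δ = -1 - β := by linear_combination -hdet
    subst hδ
    have l1 : b' = -a * (2 * β + 1) := by linear_combination e3
    have lr1 : -1 ≤ β := by nlinarith
    have lr2 : β ≤ 0 := by nlinarith
    have hβ : β = -1 ∨ β = 0 := by omega
    rcases hβ with rfl | rfl
    · have l2 : c' = a := by linear_combination e2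
      have l3 : b' = a := by linear_combination l1
      exact ⟨l3.symm, l2.symm⟩
    · exfalso
      have l2 : c' = a := by linear_combination e2
      have l3 : b' = -a := by linear_combination l1
      have := hbd2' (by omega)
      omega

lemma reduced_equiv_eq {g g' : ℤ × ℤ × ℤ} (hg : IsReducedQF g) (hg' : IsReducedQF g')
    (hpos : IsPosDefQF g) (hpos' : IsPosDefQF g') (h : ProperEquivQF g g') : g = g' := by
  have haa : g.1 = g'.1 :=
    le_antisymm (first_le hg hpos.1 h) (first_le hg' hpos'.1 (equiv_symm h))
  have ha : 0 < g.1 := hpos.1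
  obtain ⟨a, b, c⟩ := g; obtain ⟨a', b', c'⟩ := g'
  obtain ⟨α, β, γ, δ, hdet, he⟩ := h
  simp only at haa ha
  subst haa
  obtain ⟨hb, hc, hbd⟩ := hg
  obtain ⟨hb', hc', hbd'⟩ := hg'
  simp only at hb hc hbd hb' hc' hbd' ⊢
  obtain ⟨hbl, hbu⟩ := abs_le.mp hb
  obtain ⟨hbl', hbu'⟩ := abs_le.mp hb'
  have hA : |a| = a := abs_of_pos ha
  have hbd1 : b = -a → 0 ≤ b := fun hh => hbd (Or.inl (by rw [hh, abs_neg, hA]))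
  have hbd2 : a = c → 0 ≤ b := fun hh => hbd (Or.inr hh)
  have hbd1' : b' = -a → 0 ≤ b' := fun hh => hbd' (Or.inl (by rw [hh, abs_neg, hA]))
  have hbd2' : a = c' → 0 ≤ b' := fun hh => hbd' (Or.inr hh)
  have h10 := he 1 0; have h01 := he 0 1; have h11 := he 1 1
  simp only [evalQF] at h10 h01 h11
  have e1 : a = a * α ^ 2 + b * α * γ + c * γ ^ 2 := by linear_combination h10
  have e2 : c' = a * β ^ 2 + b * β * δ + c * δ ^ 2 := by linear_combination h01
  have e3 : b' = 2 * a * α * β + b * (α * δ + β * γ) + 2 * c * γ * δ := by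
    linear_combination h11 - h10 - h01
  clear h10 h01 h11 he hbd hbd'
  rcases eq_or_ne γ 0 with rfl | hγ
  · -- Case A : γ = 0
    have hαδ : α * δ = 1 := by linear_combination hdet
    have key : ∀ m : ℤ, b' = b + 2 * a * m → c' = c + b * m + a * m ^ 2 → b = b' ∧ c = c' := by
      intro m f3 f2
      rcases lt_trichotomy m 0 with hm | rfl | hm
      · exfalso
        have k1 : -a ≤ b + 2 * a * m := f3 ▸ hbl'
        have hge : -1 ≤ m := by nlinarith
        have hm1 : m = -1 := by omega
        subst hm1
        have f3' : b' = b - 2 * a := by linear_combination f3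
        have hba : b = a := by omega
        have hb'a : b' = -a := by omega
        have := hbd1' hb'a; omega
      · have j1 : b = b' := by linear_combination -f3
        have j2 : c = c' := by linear_combination -f2
        exact ⟨j1, j2⟩
      · exfalso
        have k1 : b + 2 * a * m ≤ a := f3 ▸ hbu'
        have hge : m ≤ 1 := by nlinarith
        have hm1 : m = 1 := by omega
        subst hm1
        have f3' : b' = b + 2 * a := by linear_combination f3
        have hba : b = -a := by omega
        have := hbd1 hba; omega
    rcases Int.mul_eq_one_iff_eq_one_or_neg_one.mp hαδ with ⟨rfl, rfl⟩ | ⟨rfl, rfl⟩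
    · obtain ⟨f1, f2⟩ := key β (by linear_combination e3) (by linear_combination e2)
      exact Prod.ext rfl (Prod.ext f1 f2)
    · obtain ⟨f1, f2⟩ := key (-β) (by linear_combination e3) (by linear_combination e2)
      exact Prod.ext rfl (Prod.ext f1 f2)
  rcases eq_or_ne α 0 with rfl | hα
  · -- Case B : α = 0
    have hβγ : β * (-γ) = 1 := by linear_combination hdet
    have key : ∀ m : ℤ, b' = 2 * a * m - b → c' = a - b * m + a * m ^ 2 → c = a →
        b = b' ∧ c = c' := by
      intro m f3 f2 hca
      have hb0 : 0 ≤ b := hbd2 hca.symm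
      rcases lt_trichotomy m 0 with hm | rfl | hm
      · exfalso
        have k1 : -a ≤ 2 * a * m - b := f3 ▸ hbl'
        nlinarith
      · have hb'' : b' = -b := by linear_combination f3
        have hac' : a = c' := by linear_combination -f2
        have := hbd2' hac'
        constructor <;> omega
      · have k1 : 2 * a * m - b ≤ a := f3 ▸ hbu'
        have hm1 : m ≤ 1 := by nlinarith
        have hm2 : m = 1 := by omega
        subst hm2
        have f3' : b' = 2 * a - b := by linear_combination f3
        have f2' : c' = 2 * a - b := by linear_combination f2
        have hba : b = a := by omega
        constructor <;> omega
    rcases Int.mul_eq_one_iff_eq_one_or_neg_one.mp hβγ with ⟨rfl, hγ1⟩ | ⟨rfl, hγ1⟩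
    · -- β = 1, γ = -1
      have hγ' : γ = -1 := by omega
      subst hγ'
      have hca : c = a := by linear_combination -e1
      obtain ⟨f1, f2⟩ := key (-δ) (by linear_combination e3 - 2*δ*hca)
        (by linear_combination e2 + δ^2*hca) hca
      exact Prod.ext rfl (Prod.ext f1 f2)
    · -- β = -1, γ = 1
      have hγ' : γ = 1 := by omega
      subst hγ'
      have hca : c = a := by linear_combination -e1
      obtain ⟨f1, f2⟩ := key δ (by linear_combination e3 + 2*δ*hca)
        (by linear_combination e2 + δ^2*hca) hca
      exact Prod.ext rfl (Prod.ext f1 f2)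
  · -- Case C : α ≠ 0, γ ≠ 0
    have hmin := min_val' ha hb hc α γ hα hγ
    have hclb : c ≤ |b| := by linarith
    have habs : |b| = a := le_antisymm hb (by linarith)
    have hca : a = c := by linarith [abs_nonneg b]
    have hb0 : 0 ≤ b := hbd2 hca
    have hba : b = a := by rw [← habs, abs_of_nonneg hb0]
    rw [hba] at e1 e2 e3
    rw [← hca] at e1 e2 e3
    obtain ⟨j1, j2⟩ := caseC ha hdet hα hγ hbl' hbu' hbd2' e1 e2 e3
    refine Prod.ext rfl (Prod.ext ?_ ?_) <;> simp <;> omega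

end QFAux

/-- Every primitive positive definite binary quadratic form is properly equivalent
to a unique reduced form. -/
theorem stmt_3 (f : ℤ × ℤ × ℤ) (hprim : IsPrimitiveQF f) (hpos : IsPosDefQF f) :
    ∃! g : ℤ × ℤ × ℤ, IsReducedQF g ∧ ProperEquivQF f g := by
  obtain ⟨g, hgred, hgequiv⟩ := QFAux.exists_reduced f hpos
  refine ⟨g, ⟨hgred, hgequiv⟩, ?_⟩
  rintro g' ⟨hg'red, hg'equiv⟩
  have hgpos : IsPosDefQF g := QFAux.posdef_equiv hgequiv hpos
  have hg'pos : IsPosDefQF g' := QFAux.posdef_equiv hg'equiv hpos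
  exact QFAux.reduced_equiv_eq hg'red hgred hg'pos hgpos
    (QFAux.equiv_trans (QFAux.equiv_symm hg'equiv) hgequiv)
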